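/- For every n ≥ 2, the QBF P_n.(φ_n ∧ ψ_n), where P_n.φ_n = QUPARITY_n and ψ_n = (x̄_1∨x_2) ∧ x̄_2 ∧ … ∧ x̄_n, has a Q-Res refutation of length at most 2n+1 (counting R and U steps). -/
import Mathlib


/-! Generic framework for QBFs in prenex CNF. -/

inductive Q
  | ex
  | all
deriving DecidableEq

abbrev Lit (V : Type) := V × Bool
abbrev Clause (V : Type) := Finset (Lit V)
abbrev Cnf (V : Type) := Finset (Clause V)
abbrev QPrefix (V : Type) := List (Q × V)

variable {V : Type} [DecidableEq V]

/-- Negation of a literal. -/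
def negLit (l : Lit V) : Lit V := (l.1, !l.2)

/-- Evaluation of a literal under an assignment. -/
def evalLit (τ : V → Bool) (l : Lit V) : Bool := if l.2 then τ l.1 else !(τ l.1)

/-- An assignment satisfies a clause if some literal evaluates to true. -/
def SatClause (τ : V → Bool) (C : Clause V) : Prop := ∃ l ∈ C, evalLit τ l = true

/-- An assignment satisfies a CNF if it satisfies all clauses. -/
def SatCnf (τ : V → Bool) (φ : Cnf V) : Prop := ∀ C ∈ φ, SatClause τ C

/-- Recursive semantics of a quantifier prefix over a matrix predicate. -/
def QTrue : QPrefix V → (V → Bool) → ((V → Bool) → Prop) → Prop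
  | [], τ, M => M τ
  | (Q.ex, v) :: P, τ, M => ∃ b, QTrue P (Function.update τ v b) M
  | (Q.all, v) :: P, τ, M => ∀ b, QTrue P (Function.update τ v b) M

/-- Truth of a prenex CNF QBF (closed; the default assignment is irrelevant). -/
def QBFTrue (P : QPrefix V) (φ : Cnf V) : Prop :=
  QTrue P (fun _ => false) (fun τ => SatCnf τ φ)

/-- Two variables are in the same quantifier block of a prefix. -/
def SameBlock (P : QPrefix V) (v w : V) : Prop :=
  ∃ i j : ℕ, (∃ q : Q, P[i]? = some (q, v)) ∧ (∃ q : Q, P[j]? = some (q, w)) ∧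
    ∀ (k₁ k₂ : ℕ) (e₁ e₂ : Q × V), min i j ≤ k₁ → k₁ ≤ k₂ → k₂ ≤ max i j →
      P[k₁]? = some e₁ → P[k₂]? = some e₂ → e₁.1 = e₂.1

/-- An admissible literal map for a prefix: a bijection on literals commuting with
negation and moving variables only within their quantifier block. -/
structure Admissible (P : QPrefix V) (σ : Lit V → Lit V) : Prop where
  bij : Function.Bijective σ
  neg : ∀ l, σ (negLit l) = negLit (σ l)
  block : ∀ v w b c, σ (v, b) = (w, c) → v ≠ w → SameBlock P v w

/-- Action of a literal map on a clause. -/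
def mapClause (σ : Lit V → Lit V) (C : Clause V) : Clause V := C.image σ

/-- A (syntactic) symmetry of a QBF: an admissible map sending the clause set to itself. -/
def IsSymmetry (P : QPrefix V) (φ : Cnf V) (σ : Lit V → Lit V) : Prop :=
  Admissible P σ ∧ φ.image (mapClause σ) = φ

def IsExist (P : QPrefix V) (v : V) : Prop := (Q.ex, v) ∈ P
def IsUniv (P : QPrefix V) (v : V) : Prop := (Q.all, v) ∈ P

/-- A clause is a tautology if it contains complementary literals. -/
def Tauto (C : Clause V) : Prop := ∃ l ∈ C, negLit l ∈ C

/-- Rule R of Q-Res: resolution over an existential variable, with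
non-tautological resolvent. -/
def ResStep (P : QPrefix V) (E₁ E₂ E : Clause V) : Prop :=
  ∃ x, IsExist P x ∧ (x, true) ∈ E₁ ∧ (x, false) ∈ E₂ ∧
    E = E₁.erase (x, true) ∪ E₂.erase (x, false) ∧ ¬ Tauto E

/-- Prefix order on variables: `v` occurs strictly before `w`. -/
def LtP (P : QPrefix V) (v w : V) : Prop :=
  ∃ i j : ℕ, i < j ∧ (∃ q : Q, P[i]? = some (q, v)) ∧ (∃ q : Q, P[j]? = some (q, w))

/-- Rule U of Q-Res: universal reduction. -/
def URed (P : QPrefix V) (F₁ F : Clause V) : Prop :=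
  ∃ l, IsUniv P l.1 ∧ l ∈ F₁ ∧ negLit l ∉ F₁ ∧ F = F₁.erase l ∧
    ∀ k ∈ F₁.erase l, IsExist P k.1 → LtP P k.1 l.1

/-- Derivability in Q-Res (rules A, R, U). -/
inductive Derives (P : QPrefix V) (φ : Cnf V) : Clause V → Prop
  | ax {C : Clause V} : C ∈ φ → Derives P φ C
  | res {E₁ E₂ E : Clause V} :
      Derives P φ E₁ → Derives P φ E₂ → ResStep P E₁ E₂ E → Derives P φ E
  | ured {F₁ F : Clause V} : Derives P φ F₁ → URed P F₁ F → Derives P φ F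

/-- Derivability in Q-Res+S (rules A, R, U, S). -/
inductive DerivesS (P : QPrefix V) (φ : Cnf V) : Clause V → Prop
  | ax {C : Clause V} : C ∈ φ → DerivesS P φ C
  | res {E₁ E₂ E : Clause V} :
      DerivesS P φ E₁ → DerivesS P φ E₂ → ResStep P E₁ E₂ E → DerivesS P φ E
  | ured {F₁ F : Clause V} : DerivesS P φ F₁ → URed P F₁ F → DerivesS P φ F
  | sym {C : Clause V} {σ : Lit V → Lit V} :
      DerivesS P φ C → IsSymmetry P φ σ → DerivesS P φ (mapClause σ C)

/-- A clause available at step `i` of a derivation sequence: an input clause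
(axiom rule A, not counted as a step) or an earlier line. -/
def Avail (φ : Cnf V) (D : List (Clause V)) (i : ℕ) (C : Clause V) : Prop :=
  C ∈ φ ∨ ∃ j, ∃ _ : j < i, ∃ hj : j < D.length, D[j]'hj = C

/-- Line `C` at position `i` is justified by rule R or U from available clauses. -/
def StepOK (P : QPrefix V) (φ : Cnf V) (D : List (Clause V)) (i : ℕ) (C : Clause V) : Prop :=
  (∃ E₁ E₂, Avail φ D i E₁ ∧ Avail φ D i E₂ ∧ ResStep P E₁ E₂ C) ∨
  (∃ F₁, Avail φ D i F₁ ∧ URed P F₁ C)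

/-- Line justified by rule R, U or the symmetry rule S. -/
def StepOKS (P : QPrefix V) (φ : Cnf V) (D : List (Clause V)) (i : ℕ) (C : Clause V) : Prop :=
  StepOK P φ D i C ∨
  (∃ F₁ σ, Avail φ D i F₁ ∧ IsSymmetry P φ σ ∧ C = mapClause σ F₁)

/-- A Q-Res refutation, as a sequence of R/U steps ending in the empty clause;
its length is the number of R and U applications. -/
def IsRefutation (P : QPrefix V) (φ : Cnf V) (D : List (Clause V)) : Prop :=
  (∀ i (hi : i < D.length), StepOK P φ D i (D[i]'hi)) ∧ D.getLast? = some (∅ : Clause V)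

/-- A Q-Res+S refutation. -/
def IsRefutationS (P : QPrefix V) (φ : Cnf V) (D : List (Clause V)) : Prop :=
  (∀ i (hi : i < D.length), StepOKS P φ D i (D[i]'hi)) ∧ D.getLast? = some (∅ : Clause V)

/-- A derivation sequence using rules A, R, U: every line is an input clause or
follows from earlier lines by R or U. -/
def IsDerivation (P : QPrefix V) (φ : Cnf V) (D : List (Clause V)) : Prop :=
  ∀ i (hi : i < D.length), (D[i]'hi) ∈ φ ∨
    (∃ j k, ∃ hj : j < i, ∃ hk : k < i,
      ResStep P (D[j]'(Nat.lt_trans hj hi)) (D[k]'(Nat.lt_trans hk hi)) (D[i]'hi)) ∨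
    (∃ j, ∃ hj : j < i, URed P (D[j]'(Nat.lt_trans hj hi)) (D[i]'hi))

/-! The KBKF formula family (variables indexed 1..n). -/

inductive KV
  | x (i : ℕ)
  | y (i : ℕ)
  | a (i : ℕ)
  | z (i : ℕ)
deriving DecidableEq

/-- Prefix ∃x₁y₁∀a₁ … ∃xₙyₙ∀aₙ ∃z₁…zₙ. -/
def kPrefix (n : ℕ) : QPrefix KV :=
  ((List.range n).flatMap
    (fun j => [(Q.ex, KV.x (j+1)), (Q.ex, KV.y (j+1)), (Q.all, KV.a (j+1))])) ++
  (List.range n).map (fun j => (Q.ex, KV.z (j+1)))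

/-- The tail z̄₁ ∨ … ∨ z̄ₙ. -/
def kZneg (n : ℕ) : Clause KV := (Finset.range n).image (fun j => ((KV.z (j+1), false) : Lit KV))

/-- The clauses of KBKF_n. -/
def kbkf (n : ℕ) : Cnf KV :=
  {({(KV.x 1, false), (KV.y 1, false)} : Clause KV)} ∪
  ((Finset.range (n-1)).image (fun j =>
    ({(KV.x (j+1), true), (KV.a (j+1), false), (KV.x (j+2), false), (KV.y (j+2), false)} : Clause KV))) ∪
  ((Finset.range (n-1)).image (fun j =>
    ({(KV.y (j+1), true), (KV.a (j+1), true), (KV.x (j+2), false), (KV.y (j+2), false)} : Clause KV))) ∪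
  {({(KV.x n, true), (KV.a n, false)} : Clause KV) ∪ kZneg n,
   ({(KV.y n, true), (KV.a n, true)} : Clause KV) ∪ kZneg n} ∪
  ((Finset.range n).image (fun j => ({(KV.a (j+1), true), (KV.z (j+1), true)} : Clause KV))) ∪
  ((Finset.range n).image (fun j => ({(KV.a (j+1), false), (KV.z (j+1), true)} : Clause KV)))

/-- The symmetry σᵢ = (xᵢ yᵢ)(x̄ᵢ ȳᵢ)(aᵢ āᵢ) of KBKF_n. -/
def kSigma (i : ℕ) : Lit KV → Lit KV
  | (KV.x j, b) => if j = i then (KV.y j, b) else (KV.x j, b)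
  | (KV.y j, b) => if j = i then (KV.x j, b) else (KV.y j, b)
  | (KV.a j, b) => if j = i then (KV.a j, !b) else (KV.a j, b)
  | (KV.z j, b) => (KV.z j, b)

/-- The symmetry breaker ψₙ = (x̄₁∨y₁) ∧ … ∧ (x̄ₙ∨yₙ) for KBKF_n. -/
def kPsi (n : ℕ) : Cnf KV :=
  (Finset.range n).image (fun j => ({(KV.x (j+1), false), (KV.y (j+1), true)} : Clause KV))

/-! The QUPARITY formula family. -/

inductive PV
  | x (i : ℕ)
  | a (i : ℕ)
  | y (i : ℕ)
deriving DecidableEq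

/-- Prefix ∃x₁…xₙ ∀a₁a₂ ∃y₂…yₙ. -/
def pPrefix (n : ℕ) : QPrefix PV :=
  (List.range n).map (fun j => ((Q.ex, PV.x (j+1)) : Q × PV)) ++
  [(Q.all, PV.a 1), (Q.all, PV.a 2)] ++
  (List.range (n-1)).map (fun k => ((Q.ex, PV.y (k+2)) : Q × PV))

/-- a₁ ∨ a₂ with sign `s` (s = true: unprimed clauses, s = false: primed clauses). -/
def pAA (s : Bool) : Clause PV := {(PV.a 1, s), (PV.a 2, s)}

/-- The clauses of QUPARITY_n. -/
def quparity (n : ℕ) : Cnf PV :=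
  ((Finset.univ : Finset Bool).biUnion (fun s =>
    ({({(PV.x 1, false), (PV.x 2, false), (PV.y 2, false)} : Clause PV) ∪ pAA s,
      ({(PV.x 1, false), (PV.x 2, true), (PV.y 2, true)} : Clause PV) ∪ pAA s,
      ({(PV.x 1, true), (PV.x 2, false), (PV.y 2, true)} : Clause PV) ∪ pAA s,
      ({(PV.x 1, true), (PV.x 2, true), (PV.y 2, false)} : Clause PV) ∪ pAA s} : Cnf PV) ∪
    ((Finset.range (n-2)).biUnion (fun k =>
      ({({(PV.y (k+2), false), (PV.x (k+3), false), (PV.y (k+3), false)} : Clause PV) ∪ pAA s,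
        ({(PV.y (k+2), false), (PV.x (k+3), true), (PV.y (k+3), true)} : Clause PV) ∪ pAA s,
        ({(PV.y (k+2), true), (PV.x (k+3), false), (PV.y (k+3), true)} : Clause PV) ∪ pAA s,
        ({(PV.y (k+2), true), (PV.x (k+3), true), (PV.y (k+3), false)} : Clause PV) ∪ pAA s} : Cnf PV))))) ∪
  {({(PV.a 1, true), (PV.a 2, true), (PV.y n, true)} : Clause PV),
   ({(PV.a 1, false), (PV.a 2, false), (PV.y n, false)} : Clause PV)}

/-- The symmetry σ₁ = (x₁ x₂)(x̄₁ x̄₂) of QUPARITY_n. -/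
def pSigma1 : Lit PV → Lit PV
  | (PV.x 1, b) => (PV.x 2, b)
  | (PV.x 2, b) => (PV.x 1, b)
  | l => l

/-- The symmetry σᵢ = (xᵢ x̄ᵢ)(a₁ ā₁)(a₂ ā₂)(yᵢ ȳᵢ)⋯(yₙ ȳₙ) of QUPARITY_n, 2 ≤ i ≤ n. -/
def pSigma (n i : ℕ) : Lit PV → Lit PV
  | (PV.x j, b) => if j = i then (PV.x j, !b) else (PV.x j, b)
  | (PV.a j, b) => if j = 1 ∨ j = 2 then (PV.a j, !b) else (PV.a j, b)
  | (PV.y j, b) => if i ≤ j ∧ j ≤ n then (PV.y j, !b) else (PV.y j, b)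

/-- The symmetry breaker ψₙ = (x̄₁ ∨ x₂) ∧ x̄₂ ∧ … ∧ x̄ₙ for QUPARITY_n. -/
def pPsi (n : ℕ) : Cnf PV :=
  {({(PV.x 1, false), (PV.x 2, true)} : Clause PV)} ∪
  (Finset.range (n-1)).image (fun k => ({(PV.x (k+2), false)} : Clause PV))

/-! The modified family KBKF'_n with blocking universal variables b_j. -/

inductive KV2
  | x (i : ℕ)
  | b (i : ℕ)
  | y (i : ℕ)
  | a (i : ℕ)
  | z (i : ℕ)
deriving DecidableEq

/-- Prefix ∃x₁∀b₁∃y₁∀a₁ … ∃xₙ∀bₙ∃yₙ∀aₙ ∃z₁…zₙ of KBKF'_n. -/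
def k2Prefix (n : ℕ) : QPrefix KV2 :=
  ((List.range n).flatMap
    (fun j => [(Q.ex, KV2.x (j+1)), (Q.all, KV2.b (j+1)),
               (Q.ex, KV2.y (j+1)), (Q.all, KV2.a (j+1))])) ++
  (List.range n).map (fun j => (Q.ex, KV2.z (j+1)))

/-- The map σᵢ = (xᵢ yᵢ)(x̄ᵢ ȳᵢ)(aᵢ āᵢ) on the literals of KBKF'_n. -/
def k2Sigma (i : ℕ) : Lit KV2 → Lit KV2
  | (KV2.x j, c) => if j = i then (KV2.y j, c) else (KV2.x j, c)
  | (KV2.y j, c) => if j = i then (KV2.x j, c) else (KV2.y j, c)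
  | (KV2.a j, c) => if j = i then (KV2.a j, !c) else (KV2.a j, c)
  | (KV2.b j, c) => (KV2.b j, c)
  | (KV2.z j, c) => (KV2.z j, c)


/-! Auxiliary material for the QUPARITY short refutation. -/

namespace QShort

open Finset

/-- (ȳⱼ ∨ a₁ ∨ a₂). -/
def Gc (j : ℕ) : Clause PV := {(PV.y j, false), (PV.a 1, true), (PV.a 2, true)}

/-- (xⱼ ∨ ȳⱼ ∨ a₁ ∨ a₂). -/
def Hc (j : ℕ) : Clause PV := insert (PV.x j, true) (Gc j)

/-- The matrix clause D_{k+3} (unprimed). -/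
def Djc (k : ℕ) : Clause PV :=
  ({(PV.y (k+2), true), (PV.x (k+3), true), (PV.y (k+3), false)} : Clause PV) ∪ pAA true

def D2c : Clause PV :=
  ({(PV.x 1, true), (PV.x 2, true), (PV.y 2, false)} : Clause PV) ∪ pAA true

def Psi0 : Clause PV := {(PV.x 1, false), (PV.x 2, true)}

def E1c (n : ℕ) : Clause PV := {(PV.a 1, true), (PV.a 2, true), (PV.y n, true)}

def AAc : Clause PV := {(PV.a 1, true), (PV.a 2, true)}

def A1c : Clause PV := {(PV.a 1, true)}

lemma exist_x (n j : ℕ) (h1 : 1 ≤ j) (h2 : j ≤ n) : IsExist (pPrefix n) (PV.x j) := by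
  simp only [IsExist, pPrefix, List.mem_append, List.mem_map, List.mem_range]
  exact Or.inl (Or.inl ⟨j - 1, by omega, by simp; omega⟩)

lemma exist_y (n j : ℕ) (h1 : 2 ≤ j) (h2 : j ≤ n) : IsExist (pPrefix n) (PV.y j) := by
  simp only [IsExist, pPrefix, List.mem_append, List.mem_map, List.mem_range]
  exact Or.inr ⟨j - 2, by omega, by simp; omega⟩

lemma univ_a1 (n : ℕ) : IsUniv (pPrefix n) (PV.a 1) := by
  simp [IsUniv, pPrefix]

lemma univ_a2 (n : ℕ) : IsUniv (pPrefix n) (PV.a 2) := by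
  simp [IsUniv, pPrefix]

lemma not_exist_a (n i : ℕ) : ¬ IsExist (pPrefix n) (PV.a i) := by
  simp [IsExist, pPrefix]

lemma d2c_mem (n : ℕ) : D2c ∈ quparity n := by
  simp only [quparity, Finset.mem_union, Finset.mem_biUnion, Finset.mem_univ]
  exact Or.inl ⟨true, trivial, Or.inl (by simp [D2c])⟩

lemma djc_mem (n k : ℕ) (hk : k < n - 2) : Djc k ∈ quparity n := by
  simp only [quparity, Finset.mem_union, Finset.mem_biUnion, Finset.mem_univ, Finset.mem_range]
  exact Or.inl ⟨true, trivial, Or.inr ⟨k, hk, by simp [Djc]⟩⟩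

lemma e1c_mem (n : ℕ) : E1c n ∈ quparity n := by
  rw [quparity]
  exact Finset.mem_union_right _ (Finset.mem_insert_self _ _)

lemma psi0_mem (n : ℕ) : Psi0 ∈ pPsi n := by
  simp [pPsi, Psi0]

lemma unit_mem (n j : ℕ) (h2 : 2 ≤ j) (hj : j ≤ n) :
    ({(PV.x j, false)} : Clause PV) ∈ pPsi n := by
  simp only [pPsi, Finset.mem_union, Finset.mem_image, Finset.mem_range, Finset.mem_singleton]
  exact Or.inr ⟨j - 2, by omega, by simp; omega⟩

lemma not_tauto_G (j : ℕ) : ¬ Tauto (Gc j) := by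
  rintro ⟨⟨v, b⟩, hl, hnl⟩
  simp [Gc, negLit, Prod.ext_iff] at hl hnl
  rcases hl with ⟨rfl, rfl⟩ | ⟨rfl, rfl⟩ | ⟨rfl, rfl⟩ <;> simp_all

lemma not_tauto_H (j : ℕ) : ¬ Tauto (Hc j) := by
  rintro ⟨⟨v, b⟩, hl, hnl⟩
  simp [Hc, Gc, negLit, Prod.ext_iff] at hl hnl
  rcases hl with ⟨rfl, rfl⟩ | ⟨rfl, rfl⟩ | ⟨rfl, rfl⟩ | ⟨rfl, rfl⟩ <;> simp_all

lemma not_tauto_AA : ¬ Tauto AAc := by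
  rintro ⟨⟨v, b⟩, hl, hnl⟩
  simp [AAc, negLit, Prod.ext_iff] at hl hnl
  rcases hl with ⟨rfl, rfl⟩ | ⟨rfl, rfl⟩ <;> simp_all

lemma res_base (n : ℕ) (hn : 2 ≤ n) : ResStep (pPrefix n) D2c Psi0 (Hc 2) := by
  refine ⟨PV.x 1, exist_x n 1 (by omega) (by omega), by decide, by decide, ?_, not_tauto_H 2⟩
  decide

lemma res_unit (n j : ℕ) (h2 : 2 ≤ j) (hj : j ≤ n) :
    ResStep (pPrefix n) (Hc j) ({(PV.x j, false)} : Clause PV) (Gc j) := by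
  refine ⟨PV.x j, exist_x n j (by omega) hj, by simp [Hc], by simp, ?_, not_tauto_G j⟩
  have hx : (PV.x j, true) ∉ Gc j := by simp [Gc]
  rw [Hc, Finset.erase_insert hx, Finset.erase_singleton, Finset.union_empty]

lemma res_chain (n k : ℕ) (hk : k < n - 2) :
    ResStep (pPrefix n) (Djc k) (Gc (k+2)) (Hc (k+3)) := by
  refine ⟨PV.y (k+2), exist_y n (k+2) (by omega) (by omega), by simp [Djc],
    by simp [Gc], ?_, not_tauto_H (k+3)⟩
  have e1 : (Djc k).erase (PV.y (k+2), true) =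
      (insert ((PV.x (k+3), true) : Lit PV) {(PV.y (k+3), false)}) ∪ pAA true := by
    rw [Djc, Finset.insert_union, Finset.erase_insert (by simp [pAA])]
  have e2 : (Gc (k+2)).erase (PV.y (k+2), false) = pAA true := by
    rw [Gc, Finset.erase_insert (by simp [pAA])]
    rfl
  rw [e1, e2, Finset.union_assoc, Finset.union_self]
  ext l
  simp only [Hc, Gc, pAA, Finset.mem_union, Finset.mem_insert, Finset.mem_singleton]
  tauto

lemma res_final (n : ℕ) (hn : 2 ≤ n) :
    ResStep (pPrefix n) (E1c n) (Gc n) AAc := by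
  refine ⟨PV.y n, exist_y n n hn le_rfl, by simp [E1c], by simp [Gc], ?_, not_tauto_AA⟩
  have e1 : (E1c n).erase (PV.y n, true) = AAc := by
    rw [E1c, Finset.erase_insert_of_ne (by simp), Finset.erase_insert_of_ne (by simp),
      Finset.erase_singleton]
    rfl
  have e2 : (Gc n).erase (PV.y n, false) = AAc := by
    rw [Gc, Finset.erase_insert (by simp)]
    rfl
  rw [e1, e2, Finset.union_self]

lemma ured1 (n : ℕ) : URed (pPrefix n) AAc A1c := by
  refine ⟨(PV.a 2, true), univ_a2 n, by decide, by decide, by decide, ?_⟩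
  intro k hk hex
  simp only [AAc, Finset.mem_erase, Finset.mem_insert, Finset.mem_singleton] at hk
  rcases hk with ⟨hne, rfl | rfl⟩
  · exact absurd hex (not_exist_a n 1)
  · exact absurd rfl hne

lemma ured2 (n : ℕ) : URed (pPrefix n) A1c ∅ := by
  refine ⟨(PV.a 1, true), univ_a1 n, by decide, by decide, by decide, ?_⟩
  intro k hk
  simp [A1c] at hk

lemma avail_append {φ : Cnf PV} {D D' : List (Clause PV)} {i : ℕ} {C : Clause PV}
    (h : Avail φ D i C) : Avail φ (D ++ D') i C := by
  rcases h with h | ⟨j, hji, hj, rfl⟩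
  · exact Or.inl h
  · refine Or.inr ⟨j, hji, ?_, ?_⟩
    · simp; omega
    · rw [List.getElem_append_left]

lemma stepOK_append {P : QPrefix PV} {φ : Cnf PV} {D D' : List (Clause PV)} {i : ℕ}
    {C : Clause PV} (h : StepOK P φ D i C) : StepOK P φ (D ++ D') i C := by
  rcases h with ⟨E₁, E₂, h1, h2, h3⟩ | ⟨F₁, h1, h2⟩
  · exact Or.inl ⟨E₁, E₂, avail_append h1, avail_append h2, h3⟩
  · exact Or.inr ⟨F₁, avail_append h1, h2⟩

lemma good_snoc {P : QPrefix PV} {φ : Cnf PV} {D : List (Clause PV)} {C : Clause PV}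
    (h1 : ∀ i (hi : i < D.length), StepOK P φ D i (D[i]'hi))
    (h2 : StepOK P φ D D.length C) :
    ∀ i (hi : i < (D ++ [C]).length), StepOK P φ (D ++ [C]) i ((D ++ [C])[i]'hi) := by
  intro i hi
  simp only [List.length_append, List.length_singleton] at hi
  rcases Nat.lt_or_ge i D.length with h | h
  · rw [List.getElem_append_left h]
    exact stepOK_append (h1 i h)
  · have hie : i = D.length := by omega
    subst hie
    have : (D ++ [C])[D.length]'(by simp) = C := by
      rw [List.getElem_append_right (le_refl _)]
      simp
    rw [this]
    exact stepOK_append h2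

lemma avail_of_getElem {φ : Cnf PV} {D : List (Clause PV)} (j : ℕ) {i : ℕ} {C : Clause PV}
    (hj : j < D.length) (h : D[j]'hj = C) (hji : j < i) : Avail φ D i C :=
  Or.inr ⟨j, hji, hj, h⟩

lemma getElem_snoc (D : List (Clause PV)) (C : Clause PV) (i : ℕ) (h : i = D.length) :
    (D ++ [C])[i]'(by simp; omega) = C := by
  subst h
  rw [List.getElem_append_right (le_refl _)]
  simp

end QShort

/-- QUPARITY_n with symmetry breaker ψₙ has a Q-Res refutation of
at most 2n+1 R/U steps. -/
theorem quparity_breaker_short_refutation : ∀ n : ℕ, 2 ≤ n →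
    ∃ D : List (Clause PV),
      IsRefutation (pPrefix n) (quparity n ∪ pPsi n) D ∧ D.length ≤ 2 * n + 1 := by
  intro n hn
  classical
  open QShort in
  set P := pPrefix n with hP
  set φ := quparity n ∪ pPsi n with hφ
  have hD2 : D2c ∈ φ := Finset.mem_union_left _ (d2c_mem n)
  have hDj : ∀ k, k < n - 2 → Djc k ∈ φ := fun k hk =>
    Finset.mem_union_left _ (djc_mem n k hk)
  have hE1 : E1c n ∈ φ := Finset.mem_union_left _ (e1c_mem n)
  have hPsi0 : Psi0 ∈ φ := Finset.mem_union_right _ (psi0_mem n)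
  have hUnit : ∀ j, 2 ≤ j → j ≤ n → ({(PV.x j, false)} : Clause PV) ∈ φ := fun j h2 hj =>
    Finset.mem_union_right _ (unit_mem n j h2 hj)
  have key : ∀ m, m ≤ n - 2 → ∃ L : List (Clause PV),
      (∀ i (hi : i < L.length), StepOK P φ L i (L[i]'hi)) ∧
      L.length = 2*m + 2 ∧ ∃ h : 2*m+1 < L.length, L[2*m+1]'h = Gc (m+2) := by
    intro m
    induction m with
    | zero =>
      intro _
      refine ⟨[Hc 2, Gc 2], ?_, rfl, by simp, rfl⟩
      intro i hi
      simp only [List.length_cons, List.length_nil] at hi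
      interval_cases i
      · exact Or.inl ⟨D2c, Psi0, Or.inl hD2, Or.inl hPsi0, res_base n hn⟩
      · refine Or.inl ⟨Hc 2, {(PV.x 2, false)}, ?_, Or.inl (hUnit 2 le_rfl hn),
          res_unit n 2 le_rfl hn⟩
        exact avail_of_getElem 0 (by simp) rfl (by omega)
    | succ m ih =>
      intro hm
      obtain ⟨L, hgood, hlen, hlt, hget⟩ := ih (by omega)
      have step1 : StepOK P φ L L.length (Hc (m+3)) := by
        refine Or.inl ⟨Djc m, Gc (m+2), Or.inl (hDj m (by omega)), ?_,
          res_chain n m (by omega)⟩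
        exact avail_of_getElem _ hlt hget (by omega)
      have good1 := good_snoc hgood step1
      have step2 : StepOK P φ (L ++ [Hc (m+3)]) (L ++ [Hc (m+3)]).length (Gc (m+3)) := by
        refine Or.inl ⟨Hc (m+3), {(PV.x (m+3), false)}, ?_,
          Or.inl (hUnit (m+3) (by omega) (by omega)), res_unit n (m+3) (by omega) (by omega)⟩
        exact avail_of_getElem L.length (by simp)
          (getElem_snoc L (Hc (m+3)) L.length rfl) (by simp)
      have good2 := good_snoc good1 step2
      refine ⟨(L ++ [Hc (m+3)]) ++ [Gc (m+3)], good2, by simp [hlen]; omega, by simp [hlen]; omega, ?_⟩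
      have : Gc (m+1+2) = Gc (m+3) := by norm_num
      rw [this]
      exact getElem_snoc (L ++ [Hc (m+3)]) (Gc (m+3)) (2*(m+1)+1) (by simp [hlen]; omega)
  obtain ⟨L, hgood, hlen, hlt, hget⟩ := key (n-2) le_rfl
  have hGn : L[2*(n-2)+1]'hlt = Gc n := by
    rw [hget]
    congr 1
    omega
  have stepA : StepOK P φ L L.length AAc := by
    refine Or.inl ⟨E1c n, Gc n, Or.inl hE1, ?_, res_final n hn⟩
    exact avail_of_getElem _ hlt hGn (by omega)
  have goodA := good_snoc hgood stepA
  have stepB : StepOK P φ (L ++ [AAc]) (L ++ [AAc]).length A1c := by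
    refine Or.inr ⟨AAc, ?_, ured1 n⟩
    exact avail_of_getElem L.length (by simp)
      (getElem_snoc L AAc L.length rfl) (by simp)
  have goodB := good_snoc goodA stepB
  have stepC : StepOK P φ ((L ++ [AAc]) ++ [A1c]) ((L ++ [AAc]) ++ [A1c]).length
      (∅ : Clause PV) := by
    refine Or.inr ⟨A1c, ?_, ured2 n⟩
    exact avail_of_getElem (L ++ [AAc]).length (by simp)
      (getElem_snoc (L ++ [AAc]) A1c (L ++ [AAc]).length rfl) (by simp)
  have goodC := good_snoc goodB stepC
  refine ⟨((L ++ [AAc]) ++ [A1c]) ++ [(∅ : Clause PV)], ⟨goodC, ?_⟩, ?_⟩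
  · simp
  · simp [hlen]
    omega
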